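/- arXiv:2407.07083 — 3 statements merged into one kernel-verified Lean document; each statement's English description precedes it below -/
import Mathlib

section
/- Let C, D be integers with C ≤ D, let y be a natural number, z an integer, and w an integer with C·2^y ≤ w ≤ D·2^y. Then z·2^y + w ≤ 0 if and only if there exists an integer r with C ≤ r ≤ D such that z + r ≤ 0 and (r-1)·2^y < w ≤ r·2^y. -/
theorem split_le (C D : ℤ) (hCD : C ≤ D) (y : ℕ) (z w : ℤ)
    (hw1 : C * 2 ^ y ≤ w) (hw2 : w ≤ D * 2 ^ y) :
    z * 2 ^ y + w ≤ 0 ↔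
      ∃ r : ℤ, C ≤ r ∧ r ≤ D ∧ z + r ≤ 0 ∧ (r - 1) * 2 ^ y < w ∧ w ≤ r * 2 ^ y := by
  have hn : (0:ℚ) < (2:ℚ) ^ y := by positivity
  constructor
  · intro h
    refine ⟨⌈(w : ℚ) / 2 ^ y⌉, ?_, ?_, ?_, ?_, ?_⟩
    · have : (C:ℚ) ≤ (w:ℚ) / 2 ^ y := by
        rw [le_div_iff₀ hn]
        exact_mod_cast hw1
      exact_mod_cast this.trans (Int.le_ceil _)
    · rw [Int.ceil_le]
      rw [div_le_iff₀ hn]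
      exact_mod_cast hw2
    · have h2 : ⌈(w : ℚ) / 2 ^ y⌉ ≤ -z := by
        rw [Int.ceil_le]
        rw [div_le_iff₀ hn]
        push_cast
        have : (z:ℚ) * 2 ^ y + w ≤ 0 := by exact_mod_cast h
        linarith
      linarith
    · have h3 : ((⌈(w : ℚ) / 2 ^ y⌉ : ℚ) - 1) < (w:ℚ) / 2 ^ y := by
        have := Int.ceil_lt_add_one ((w : ℚ) / 2 ^ y)
        linarith
      have h4 : ((⌈(w : ℚ) / 2 ^ y⌉ : ℚ) - 1) * 2 ^ y < w := by
        rw [← lt_div_iff₀ hn]; exact h3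
      exact_mod_cast h4
    · have h5 : (w:ℚ) ≤ (⌈(w : ℚ) / 2 ^ y⌉ : ℚ) * 2 ^ y := by
        rw [← div_le_iff₀ hn]; exact Int.le_ceil _
      exact_mod_cast h5
  · rintro ⟨r, _, _, hzr, _, hwr⟩
    have h2y : (0:ℤ) ≤ 2 ^ y := by positivity
    nlinarith
end

section
/- Let C, D be integers with C ≤ D, let y be a natural number, z an integer, and w an integer with C·2^y ≤ w ≤ D·2^y. Then z·2^y + w < 0 if and only if there exists an integer r with C ≤ r ≤ D such that either (z + r + 1 ≤ 0 and w = r·2^y) or (z + r ≤ 0 and (r-1)·2^y < w < r·2^y). -/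
theorem split_lt (C D : ℤ) (hCD : C ≤ D) (y : ℕ) (z w : ℤ)
    (hw1 : C * 2 ^ y ≤ w) (hw2 : w ≤ D * 2 ^ y) :
    z * 2 ^ y + w < 0 ↔
      ∃ r : ℤ, C ≤ r ∧ r ≤ D ∧
        ((z + r + 1 ≤ 0 ∧ w = r * 2 ^ y) ∨
         (z + r ≤ 0 ∧ (r - 1) * 2 ^ y < w ∧ w < r * 2 ^ y)) := by
  have hP : (0:ℤ) < 2 ^ y := by positivity
  set P : ℤ := 2 ^ y with hPdef
  constructor
  · intro h
    set q := w / P with hq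
    have hdiv : P * q + w % P = w := Int.mul_ediv_add_emod w P
    have hr0 : 0 ≤ w % P := Int.emod_nonneg w (by positivity)
    have hr1 : w % P < P := Int.emod_lt_of_pos w hP
    by_cases hz : w % P = 0
    · refine ⟨q, ?_, ?_, Or.inl ⟨?_, by linarith⟩⟩
      · have : C * P ≤ q * P := by nlinarith
        exact le_of_mul_le_mul_right this hP
      · have : q * P ≤ D * P := by nlinarith
        exact le_of_mul_le_mul_right this hP
      · nlinarith
    · have hr0' : 0 < w % P := lt_of_le_of_ne hr0 (Ne.symm hz)
      refine ⟨q + 1, ?_, ?_, Or.inr ⟨?_, by nlinarith, by nlinarith⟩⟩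
      · have : C * P < (q + 1) * P := by nlinarith
        exact le_of_lt (lt_of_mul_lt_mul_right this hP.le)
      · have : q * P < D * P := by nlinarith
        have := lt_of_mul_lt_mul_right this hP.le
        omega
      · have : q * P < w := by nlinarith
        nlinarith
  · rintro ⟨r, hC, hD, h | h⟩ <;> obtain ⟨h1, h2⟩ := h <;> nlinarith [h2]
end

section
/- Let α ≥ 1 be a natural number and define b_0 = 1 and b_{i+1} = lcm(b_i, φ(α·b_i)), where φ is Euler's totient. Then for every i ≥ 1, b_i ≤ α^{2·i²}. -/
/-- Submultiplicativity of the totient: `φ (m * k) ≤ φ m * k`. -/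
lemma totient_mul_le_right' (m : ℕ) : ∀ k : ℕ, Nat.totient (m * k) ≤ Nat.totient m * k := by
  intro k
  induction k using Nat.strong_induction_on with
  | _ k ih =>
    match k with
    | 0 => simp
    | 1 => simp
    | (n + 2) =>
      set k := n + 2 with hk
      have hk1 : k ≠ 1 := by omega
      have hpp : k.minFac.Prime := Nat.minFac_prime hk1
      obtain ⟨k', hk'⟩ := k.minFac_dvd
      have hp2 : 2 ≤ k.minFac := hpp.two_le
      have hk'pos : 0 < k' := by
        rcases Nat.eq_zero_or_pos k' with h | h
        · simp [h] at hk'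
        · exact h
      have hk'lt : k' < k := by
        nlinarith [hk'pos, hp2]
      have hrw : m * k = k.minFac * (m * k') := by
        conv_lhs => rw [hk']
        ring
      by_cases h : k.minFac ∣ m * k'
      · rw [hrw, Nat.totient_mul_of_prime_of_dvd hpp h]
        calc k.minFac * Nat.totient (m * k')
            ≤ k.minFac * (Nat.totient m * k') :=
              Nat.mul_le_mul_left _ (ih k' hk'lt)
          _ = Nat.totient m * (k.minFac * k') := by ring
          _ = Nat.totient m * k := by rw [← hk']
      · rw [hrw, Nat.totient_mul_of_prime_of_not_dvd hpp h]
        calc (k.minFac - 1) * Nat.totient (m * k')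
            ≤ k.minFac * (Nat.totient m * k') := by
              have h1 := ih k' hk'lt
              have h2 : k.minFac - 1 ≤ k.minFac := Nat.sub_le _ _
              calc (k.minFac - 1) * Nat.totient (m * k')
                  ≤ k.minFac * Nat.totient (m * k') := Nat.mul_le_mul_right _ h2
                _ ≤ k.minFac * (Nat.totient m * k') := Nat.mul_le_mul_left _ h1
          _ = Nat.totient m * (k.minFac * k') := by ring
          _ = Nat.totient m * k := by rw [← hk']

theorem totient_lcm_seq_bound (α : ℕ) (hα : 1 ≤ α) (b : ℕ → ℕ)
    (hb0 : b 0 = 1)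
    (hbrec : ∀ i, b (i + 1) = Nat.lcm (b i) (Nat.totient (α * b i))) :
    ∀ i, 1 ≤ i → b i ≤ α ^ (2 * i ^ 2) := by
  -- positivity of b
  have hbpos : ∀ i, 0 < b i := by
    intro i
    induction i with
    | zero => simp [hb0]
    | succ n ihn =>
      rw [hbrec n]
      exact Nat.lcm_pos ihn (Nat.totient_pos.mpr (Nat.mul_pos (by omega) ihn))
  have hbdvd : ∀ i, b i ∣ b (i + 1) := fun i => (hbrec i) ▸ Nat.dvd_lcm_left _ _
  -- key step: b (i+1) ≤ α * b i
  have hstep : ∀ i, b (i + 1) ≤ α * b i := by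
    intro i
    induction i with
    | zero =>
      rw [hbrec 0, hb0]
      simpa using Nat.totient_le α
    | succ n ihn =>
      -- notation
      set t : ℕ → ℕ := fun j => Nat.totient (α * b j) with ht
      obtain ⟨k, hkeq⟩ := hbdvd n
      have hk_le : k ≤ α := by
        have : b n * k ≤ α * b n := hkeq ▸ ihn
        have hbn := hbpos n
        nlinarith
      have htpos : 0 < t n := Nat.totient_pos.mpr (Nat.mul_pos (by omega) (hbpos n))
      -- t (n+1) ≤ t n * k
      have ht_le : t (n + 1) ≤ t n * k := by
        have : α * b (n + 1) = (α * b n) * k := by rw [hkeq]; ring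
        calc t (n + 1) = Nat.totient ((α * b n) * k) := by rw [ht]; simp only []; rw [this]
          _ ≤ Nat.totient (α * b n) * k := totient_mul_le_right' _ k
          _ = t n * k := rfl
      -- t n divides gcd (b (n+1)) (t (n+1))
      have htd1 : t n ∣ b (n + 1) := (hbrec n) ▸ Nat.dvd_lcm_right _ _
      have htd2 : t n ∣ t (n + 1) := by
        apply Nat.totient_dvd_of_dvd
        exact Nat.mul_dvd_mul_left α (hbdvd n)
      have hgcd_dvd : t n ∣ Nat.gcd (b (n + 1)) (t (n + 1)) := Nat.dvd_gcd htd1 htd2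
      have hgcd_le : t n ≤ Nat.gcd (b (n + 1)) (t (n + 1)) := by
        apply Nat.le_of_dvd _ hgcd_dvd
        exact Nat.gcd_pos_of_pos_left _ (hbpos (n + 1))
      -- gcd * lcm = product
      have hid : Nat.gcd (b (n + 1)) (t (n + 1)) * b (n + 2) = b (n + 1) * t (n + 1) := by
        rw [hbrec (n + 1)]
        exact Nat.gcd_mul_lcm _ _
      -- combine
      have h1 : b (n + 2) * t n ≤ b (n + 1) * (t n * k) := by
        calc b (n + 2) * t n ≤ b (n + 2) * Nat.gcd (b (n + 1)) (t (n + 1)) :=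
              Nat.mul_le_mul_left _ hgcd_le
          _ = b (n + 1) * t (n + 1) := by rw [mul_comm]; exact hid
          _ ≤ b (n + 1) * (t n * k) := Nat.mul_le_mul_left _ ht_le
      have h2 : b (n + 2) ≤ b (n + 1) * k := by
        have : b (n + 2) * t n ≤ (b (n + 1) * k) * t n := by
          calc b (n + 2) * t n ≤ b (n + 1) * (t n * k) := h1
            _ = (b (n + 1) * k) * t n := by ring
        exact Nat.le_of_mul_le_mul_right this htpos
      calc b (n + 2) ≤ b (n + 1) * k := h2
        _ ≤ b (n + 1) * α := Nat.mul_le_mul_left _ hk_le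
        _ = α * b (n + 1) := mul_comm _ _
  -- b i ≤ α ^ i
  have hpow : ∀ i, b i ≤ α ^ i := by
    intro i
    induction i with
    | zero => simp [hb0]
    | succ n ihn =>
      calc b (n + 1) ≤ α * b n := hstep n
        _ ≤ α * α ^ n := Nat.mul_le_mul_left _ ihn
        _ = α ^ (n + 1) := (pow_succ' α n).symm
  intro i hi
  calc b i ≤ α ^ i := hpow i
    _ ≤ α ^ (2 * i ^ 2) := Nat.pow_le_pow_right hα (by nlinarith)
end
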